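/- A nonempty subset X of the ground set E of a simple matroid M is a modular flat of M if and only if for every circuit C of M and every element e ∈ C \ X there exist an element x ∈ X and a circuit C' of M with e ∈ C' ⊆ {x} ∪ (C \ X). -/

import Mathlib

open scoped Classical

namespace Paper

variable {α : Type*}

/-- The rank of a set in a matroid: the maximum size of an independent subset. -/
noncomputable def mrk (M : Matroid α) (X : Set α) : ℕ :=
  sSup {n | ∃ I, M.Indep I ∧ I ⊆ X ∧ I.ncard = n}

/-- A circuit of a matroid: a minimal dependent subset of the ground set. -/
def Circuit (M : Matroid α) (C : Set α) : Prop :=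
  C ⊆ M.E ∧ ¬ M.Indep C ∧ ∀ D ⊂ C, M.Indep D

/-- A matroid is simple if every subset of the ground set with at most two
elements is independent. -/
def SimpleM (M : Matroid α) : Prop :=
  ∀ X ⊆ M.E, X.ncard ≤ 2 → M.Indep X

/-- A modular flat: a flat `X` with `r X + r Y = r (X ⊓ Y) + r (X ⊔ Y)` for every flat `Y`
(meet of flats is intersection; join is the closure of the union). -/
def ModularFlat (M : Matroid α) (X : Set α) : Prop :=
  M.IsFlat X ∧ ∀ Y, M.IsFlat Y →
    mrk M X + mrk M Y = mrk M (X ∩ Y) + mrk M (M.closure (X ∪ Y))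

/-- A matroid is round if its ground set is not the union of two proper flats. -/
def Round (M : Matroid α) : Prop :=
  ¬ ∃ F₁ F₂ : Set α, M.IsFlat F₁ ∧ M.IsFlat F₂ ∧ F₁ ≠ M.E ∧ F₂ ≠ M.E ∧ M.E = F₁ ∪ F₂

section Aux

open Set

variable {M : Matroid α} {A B C F F' I J X : Set α} {e x : α}


lemma flat_closure (M : Matroid α) (X : Set α) : M.IsFlat (M.closure X) := by
  refine ⟨fun I Y hI hIY => ?_, M.closure_subset_ground X⟩
  have h1 : Y ⊆ M.closure I := hIY.subset_closure
  rwa [hI.closure_eq_closure, M.closure_closure] at h1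

lemma mrk_eq_ncard_of_basis (hfin : M.E.Finite) (hA : A ⊆ M.E) (hI : M.IsBasis I A) :
    mrk M A = I.ncard := by
  have hub : ∀ n ∈ {n | ∃ J, M.Indep J ∧ J ⊆ A ∧ J.ncard = n}, n ≤ I.ncard := by
    rintro n ⟨J, hJ, hJA, rfl⟩
    obtain ⟨J', hJ', hJJ'⟩ := hJ.subset_isBasis_of_subset hJA hA
    have hc : J'.ncard = I.ncard := by
      rw [Set.ncard_def, hJ'.encard_eq_encard hI, ← Set.ncard_def]
    exact le_trans (Set.ncard_le_ncard hJJ' (hfin.subset (hJ'.subset.trans hA))) hc.le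
  have hmem : I.ncard ∈ {n | ∃ J, M.Indep J ∧ J ⊆ A ∧ J.ncard = n} :=
    ⟨I, hI.indep, hI.subset, rfl⟩
  exact le_antisymm (csSup_le ⟨_, hmem⟩ hub) (le_csSup ⟨I.ncard, hub⟩ hmem)

lemma mrk_indep (hfin : M.E.Finite) (hI : M.Indep I) : mrk M I = I.ncard :=
  mrk_eq_ncard_of_basis hfin hI.subset_ground hI.isBasis_self

lemma mrk_mono (hfin : M.E.Finite) (hAB : A ⊆ B) (hB : B ⊆ M.E) : mrk M A ≤ mrk M B := by
  obtain ⟨I, hI⟩ := M.exists_isBasis A (hAB.trans hB)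
  obtain ⟨J, hJ, hIJ⟩ := hI.indep.subset_isBasis_of_subset (hI.subset.trans hAB) hB
  rw [mrk_eq_ncard_of_basis hfin (hAB.trans hB) hI, mrk_eq_ncard_of_basis hfin hB hJ]
  exact Set.ncard_le_ncard hIJ (hfin.subset (hJ.subset.trans hB))

lemma mrk_closure_eq (hfin : M.E.Finite) (hA : A ⊆ M.E) : mrk M (M.closure A) = mrk M A := by
  obtain ⟨I, hI⟩ := M.exists_isBasis A hA
  rw [mrk_eq_ncard_of_basis hfin (M.closure_subset_ground A) hI.isBasis_closure_right,
      mrk_eq_ncard_of_basis hfin hA hI]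

lemma mrk_eq_of_subset_closure (hfin : M.E.Finite) (hAB : A ⊆ B) (hBcl : B ⊆ M.closure A)
    (hB : B ⊆ M.E) : mrk M B = mrk M A := by
  refine le_antisymm ?_ (mrk_mono hfin hAB hB)
  have h1 : mrk M B ≤ mrk M (M.closure A) :=
    mrk_mono hfin hBcl (M.closure_subset_ground A)
  rwa [mrk_closure_eq hfin (hAB.trans hB)] at h1

lemma mrk_submod (hfin : M.E.Finite) (hA : A ⊆ M.E) (hB : B ⊆ M.E) :
    mrk M (A ∩ B) + mrk M (A ∪ B) ≤ mrk M A + mrk M B := by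
  obtain ⟨I, hI⟩ := M.exists_isBasis (A ∩ B) (inter_subset_left.trans hA)
  obtain ⟨IA, hIA, hIIA⟩ := hI.indep.subset_isBasis_of_subset (hI.subset.trans inter_subset_left) hA
  obtain ⟨J, hJ, hIAJ⟩ :=
    hIA.indep.subset_isBasis_of_subset (hIA.subset.trans subset_union_left) (union_subset hA hB)
  have hJfin : J.Finite := hfin.subset (hJ.subset.trans (union_subset hA hB))
  have hKB : (J \ IA) ∪ I ⊆ B := by
    rintro y (⟨hyJ, hyIA⟩ | hyI)
    · rcases hJ.subset hyJ with h | h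
      · exfalso
        apply hyIA
        have heq : IA = insert y IA :=
          hIA.eq_of_subset_indep (hJ.indep.subset (insert_subset hyJ hIAJ))
            (subset_insert _ _) (insert_subset h hIA.subset)
        rw [heq]; exact mem_insert _ _
      · exact h
    · exact (hI.subset hyI).2
  have hKindep : M.Indep ((J \ IA) ∪ I) :=
    hJ.indep.subset (union_subset diff_subset (hIIA.trans hIAJ))
  have hKcard : ((J \ IA) ∪ I).ncard = J.ncard - IA.ncard + I.ncard := by
    rw [Set.ncard_union_eq (disjoint_of_subset_right hIIA disjoint_sdiff_left)
      (hJfin.subset diff_subset) (hJfin.subset (hIIA.trans hIAJ)),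
      Set.ncard_diff hIAJ (hJfin.subset hIAJ)]
  have hrB : J.ncard - IA.ncard + I.ncard ≤ mrk M B := by
    rw [← hKcard, ← mrk_indep hfin hKindep]
    exact mrk_mono hfin hKB hB
  have hIAle : IA.ncard ≤ J.ncard := Set.ncard_le_ncard hIAJ hJfin
  rw [mrk_eq_ncard_of_basis hfin (inter_subset_left.trans hA) hI,
      mrk_eq_ncard_of_basis hfin (union_subset hA hB) hJ,
      mrk_eq_ncard_of_basis hfin hA hIA]
  omega

lemma exists_circuit_aux (hfin : M.E.Finite) :
    ∀ n (D : Set α), D.ncard ≤ n → D ⊆ M.E → ¬ M.Indep D → ∃ C, C ⊆ D ∧ Circuit M C := by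
  intro n
  induction n with
  | zero =>
    intro D h hE hdep
    rw [Nat.le_zero, Set.ncard_eq_zero (hfin.subset hE)] at h
    exact absurd (h ▸ M.empty_indep) hdep
  | succ n ih =>
    intro D h hE hdep
    by_cases hall : ∀ D' ⊂ D, M.Indep D'
    · exact ⟨D, Subset.rfl, hE, hdep, hall⟩
    · push_neg at hall
      obtain ⟨D', hss, hdep'⟩ := hall
      obtain ⟨C, hCD, hC⟩ := ih D'
        (by have := Set.ncard_lt_ncard hss (hfin.subset hE); omega)
        (hss.subset.trans hE) hdep'
      exact ⟨C, hCD.trans hss.subset, hC⟩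

lemma exists_circuit_subset (hfin : M.E.Finite) (hDE : A ⊆ M.E) (hdep : ¬ M.Indep A) :
    ∃ C, C ⊆ A ∧ Circuit M C :=
  exists_circuit_aux hfin A.ncard A le_rfl hDE hdep

lemma Circuit.mem_closure_diff (hC : Circuit M C) (he : e ∈ C) :
    e ∈ M.closure (C \ {e}) := by
  have hD : M.Indep (C \ {e}) := hC.2.2 _ (Set.sdiff_singleton_ssubset.2 he)
  by_contra h
  have hins : M.Indep (insert e (C \ {e})) := by
    rw [hD.insert_indep_iff_of_notMem (fun h' => h'.2 rfl)]
    exact ⟨hC.1 he, h⟩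
  rw [Set.insert_diff_singleton, Set.insert_eq_of_mem he] at hins
  exact hC.2.1 hins

lemma exists_circuit_of_mem_closure (hfin : M.E.Finite) (hA : A ⊆ M.E)
    (he : e ∈ M.closure A) (heA : e ∉ A) :
    ∃ C, Circuit M C ∧ e ∈ C ∧ C ⊆ insert e A := by
  obtain ⟨I, hI⟩ := M.exists_isBasis A hA
  have heI : e ∈ M.closure I := by rw [hI.closure_eq_closure]; exact he
  have heInot : e ∉ I := fun h => heA (hI.subset h)
  have hdep : ¬ M.Indep (insert e I) := by
    intro h
    rcases hI.indep.insert_indep_iff.1 h with h1 | h1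
    · exact h1.2 heI
    · exact heInot h1
  obtain ⟨C, hCsub, hC⟩ := exists_circuit_subset hfin
    (insert_subset (M.closure_subset_ground I heI) (hI.indep.subset_ground)) hdep
  have heC : e ∈ C := by
    by_contra h
    exact hC.2.1 (hI.indep.subset (fun y hy => ((hCsub hy).resolve_left
      (fun h' => h (h' ▸ hy)))))
  exact ⟨C, hC, heC, hCsub.trans (insert_subset_insert hI.subset)⟩

lemma flat_eq_of_mrk_le (hfin : M.E.Finite) (hF : M.IsFlat F) (hF' : M.IsFlat F')
    (hss : F ⊆ F') (hr : mrk M F' ≤ mrk M F) : F = F' := by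
  obtain ⟨I, hI⟩ := M.exists_isBasis F hF.subset_ground
  obtain ⟨J, hJ, hIJ⟩ := hI.indep.subset_isBasis_of_subset (hI.subset.trans hss) hF'.subset_ground
  rw [mrk_eq_ncard_of_basis hfin hF'.subset_ground hJ,
      mrk_eq_ncard_of_basis hfin hF.subset_ground hI] at hr
  have hIJeq : I = J :=
    Set.eq_of_subset_of_ncard_le hIJ hr (hfin.subset (hJ.subset.trans hF'.subset_ground))
  refine hss.antisymm ?_
  have h1 : F' ⊆ M.closure I := hIJeq ▸ hJ.subset_closure
  have h2 : M.closure I ⊆ M.closure F := M.closure_subset_closure hI.subset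
  rw [hF.closure] at h2
  exact h1.trans h2


lemma key_ind (hfin : M.E.Finite) (hXE : X ⊆ M.E) (hflat : M.IsFlat X)
    (hcond : ∀ C : Set α, Circuit M C → ∀ e ∈ C \ X,
        ∃ x ∈ X, ∃ C' : Set α, Circuit M C' ∧ e ∈ C' ∧ C' ⊆ insert x (C \ X)) :
    ∀ n (I : Set α), M.Indep I → (I \ X).ncard = n →
      mrk M X + I.ncard ≤ mrk M (X ∩ M.closure I) + mrk M (X ∪ I) := by

  intro n
  induction n with
  | zero =>
    intro I hI hn
    have hIfin : I.Finite := hfin.subset hI.subset_ground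
    have hIX : I ⊆ X := by
      rw [Set.ncard_eq_zero (hIfin.diff), Set.diff_eq_empty] at hn
      exact hn
    rw [Set.union_eq_self_of_subset_right hIX]
    have h1 : I.ncard ≤ mrk M (X ∩ M.closure I) := by
      rw [← mrk_indep hfin hI]
      exact mrk_mono hfin (subset_inter hIX (M.subset_closure I hI.subset_ground))
        (inter_subset_left.trans hXE)
    omega
  | succ n ih =>
    intro I hI hn
    have hIE : I ⊆ M.E := hI.subset_ground
    have hIfin : I.Finite := hfin.subset hIE
    obtain ⟨e, he⟩ : (I \ X).Nonempty := by
      rw [← Set.ncard_pos (hIfin.diff)]; omega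
    set I' : Set α := I \ {e} with hI'def
    have hI'I : I' ⊆ I := diff_subset
    have hI'indep : M.Indep I' := hI.subset hI'I
    have heI' : e ∉ I' := fun h => h.2 rfl
    have hins : insert e I' = I := by
      rw [hI'def, Set.insert_diff_singleton, Set.insert_eq_of_mem he.1]
    have heclI' : e ∉ M.closure I' := by
      intro h
      have := hI'indep.insert_indep_iff_of_notMem heI'
      rw [hins] at this
      exact (this.1 hI).2 h
    have hI'E : I' ⊆ M.E := hI'I.trans hIE
    have hn' : (I' \ X).ncard = n := by
      have : I' \ X = (I \ X) \ {e} := by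
        rw [hI'def, Set.diff_diff_comm]
      rw [this]
      have := Set.ncard_diff_singleton_add_one he ((hIfin.diff) : (I \ X).Finite)
      omega
    have hcard : I.ncard = I'.ncard + 1 := by
      rw [← hins, Set.ncard_insert_of_notMem heI' (hIfin.subset hI'I)]
    have heXI' : e ∉ X ∪ I' := by rintro (h | h); exacts [he.2 h, heI' h]
    by_cases hcl : e ∈ M.closure (X ∪ I')
    · -- hard case
      obtain ⟨C, hC, heC, hCsub⟩ :=
        exists_circuit_of_mem_closure hfin (union_subset hXE hI'E) hcl heXI'
      obtain ⟨x, hxX, C', hC', heC', hC'sub⟩ := hcond C hC e ⟨heC, he.2⟩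
      have hCXsub : C \ X ⊆ insert e I' := by
        rintro y ⟨hyC, hyX⟩
        rcases hCsub hyC with h | h
        · exact Or.inl h
        · rcases h with h | h
          exacts [absurd h hyX, Or.inr h]
      have heclxI' : e ∈ M.closure (insert x I') := by
        have h1 : e ∈ M.closure (C' \ {e}) := hC'.mem_closure_diff heC'
        refine M.closure_subset_closure ?_ h1
        rintro y ⟨hyC', hyne⟩
        rcases hC'sub hyC' with h | h
        · exact Or.inl h
        · rcases hCXsub h with h' | h'
          exacts [absurd h' hyne, Or.inr h']
      have hxE : x ∈ M.E := hXE hxX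
      have hxI' : x ∉ I' := by
        intro h
        have : insert x I' = I' := Set.insert_eq_of_mem h
        rw [this] at heclxI'
        exact heclI' heclxI'
      have hxclI' : x ∉ M.closure I' := by
        intro h
        have hsub : insert x I' ⊆ M.closure I' :=
          insert_subset h (M.subset_closure I' hI'E)
        exact heclI' (M.closure_subset_closure_of_subset_closure hsub heclxI')
      have hI''indep : M.Indep (insert x I') := by
        rw [hI'indep.insert_indep_iff_of_notMem hxI']
        exact ⟨hxE, hxclI'⟩
      set I'' : Set α := insert x I' with hI''def
      have hI''E : I'' ⊆ M.E := insert_subset hxE hI'E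
      have hI''card : I''.ncard = I.ncard := by
        rw [hI''def, Set.ncard_insert_of_notMem hxI' (hIfin.subset hI'I)]; omega
      -- closure I = closure I''
      have hclsub : M.closure I ⊆ M.closure I'' := by
        refine M.closure_subset_closure_of_subset_closure ?_
        rw [← hins]
        exact insert_subset heclxI' ((subset_insert x I').trans (M.subset_closure I'' hI''E))
      have hcleq : M.closure I = M.closure I'' := by
        refine flat_eq_of_mrk_le hfin (flat_closure M I) (flat_closure M I'') hclsub ?_
        rw [mrk_closure_eq hfin hIE, mrk_closure_eq hfin hI''E,
          mrk_indep hfin hI, mrk_indep hfin hI''indep, hI''card]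
      have hn'' : (I'' \ X).ncard = n := by
        have : I'' \ X = I' \ X := by
          rw [hI''def, Set.insert_diff_of_mem _ hxX]
        rw [this, hn']
      have hstep := ih I'' hI''indep hn''
      rw [hI''card, ← hcleq] at hstep
      refine hstep.trans ?_
      have : mrk M (X ∪ I'') ≤ mrk M (X ∪ I) := by
        refine mrk_mono hfin ?_ (union_subset hXE hIE)
        rw [hI''def]
        rintro y (h | h)
        · exact Or.inl h
        · rcases h with rfl | h
          exacts [Or.inl hxX, Or.inr (hI'I h)]
      omega
    · -- easy case
      obtain ⟨J, hJ⟩ := M.exists_isBasis (X ∪ I') (union_subset hXE hI'E)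
      have heJ : e ∉ J := fun h => heXI' (hJ.subset h)
      have heclJ : e ∉ M.closure J := by rwa [hJ.closure_eq_closure]
      have hJfin : J.Finite := hfin.subset hJ.indep.subset_ground
      have hJe : M.Indep (insert e J) := by
        rw [hJ.indep.insert_indep_iff_of_notMem heJ]
        exact ⟨hIE he.1, heclJ⟩
      have hXIeq : X ∪ I = insert e (X ∪ I') := by
        rw [← hins, Set.union_insert]
      have hJbasis : M.IsBasis (insert e J) (X ∪ I) := by
        refine hJe.isBasis_of_subset_of_subset_closure ?_ ?_
        · rw [hXIeq]; exact insert_subset_insert hJ.subset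
        · rw [hXIeq]
          refine insert_subset ?_ ?_
          · exact M.subset_closure _ hJe.subset_ground (mem_insert e J)
          · exact hJ.subset_closure.trans (M.closure_subset_closure (subset_insert e J))
      have hr1 : mrk M (X ∪ I) = J.ncard + 1 := by
        rw [mrk_eq_ncard_of_basis hfin (union_subset hXE hIE) hJbasis,
          Set.ncard_insert_of_notMem heJ hJfin]
      have hr2 : mrk M (X ∪ I') = J.ncard :=
        mrk_eq_ncard_of_basis hfin (union_subset hXE hI'E) hJ
      have hstep := ih I' hI'indep hn'
      have hmono : mrk M (X ∩ M.closure I') ≤ mrk M (X ∩ M.closure I) := by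
        refine mrk_mono hfin (inter_subset_inter_right X (M.closure_subset_closure hI'I))
          (inter_subset_left.trans hXE)
      omega

end Aux

open Set in
/-- Brylawski's modular short-circuit axiom. -/
theorem stmt13 (M : Matroid α) (hfin : M.E.Finite) (hsimple : SimpleM M)
    {X : Set α} (hXE : X ⊆ M.E) (hne : X.Nonempty) :
    ModularFlat M X ↔
      ∀ C : Set α, Circuit M C → ∀ e ∈ C \ X,
        ∃ x ∈ X, ∃ C' : Set α, Circuit M C' ∧ e ∈ C' ∧ C' ⊆ insert x (C \ X) := by
  constructor
  · rintro ⟨hflat, hmod⟩ C hC e he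
    by_cases hCX : (C ∩ X) = ∅
    · obtain ⟨x, hx⟩ := hne
      have hsub : C ⊆ C \ X := fun y hy =>
        ⟨hy, fun hyX => (Set.eq_empty_iff_forall_notMem.1 hCX y ⟨hy, hyX⟩)⟩
      exact ⟨x, hx, C, hC, he.1, hsub.trans (subset_insert _ _)⟩
    · obtain ⟨f, hf⟩ := Set.nonempty_iff_ne_empty.2 hCX
      set C₂ : Set α := C \ X with hC₂def
      have hC₂ss : C₂ ⊂ C := ⟨diff_subset, fun h => (h hf.1).2 hf.2⟩
      have hC₂indep : M.Indep C₂ := hC.2.2 _ hC₂ss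
      have hC₂E : C₂ ⊆ M.E := hC₂indep.subset_ground
      have hC₂fin : C₂.Finite := hfin.subset hC₂E
      have heC₂ : e ∈ C₂ := he
      -- the modular equation at Y = closure C₂
      have heq := hmod (M.closure C₂) (flat_closure M C₂)
      rw [mrk_closure_eq hfin hC₂E, mrk_indep hfin hC₂indep] at heq
      have hclu : mrk M (M.closure (X ∪ M.closure C₂)) = mrk M (X ∪ C₂) := by
        rw [mrk_closure_eq hfin (union_subset hXE (M.closure_subset_ground C₂))]
        refine mrk_eq_of_subset_closure hfin
          (union_subset_union_right X (M.subset_closure C₂ hC₂E)) ?_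
          (union_subset hXE (M.closure_subset_ground C₂))
        exact union_subset
          ((subset_union_left).trans (M.subset_closure _ (union_subset hXE hC₂E)))
          (M.closure_subset_closure subset_union_right)
      rw [hclu] at heq
      have hXC₂E : X ∪ C₂ ⊆ M.E := union_subset hXE hC₂E
      -- r (X ∪ (C₂ \ {e})) = r (X ∪ C₂)
      have hCdiffsub : C \ {e} ⊆ X ∪ (C₂ \ {e}) := by
        rintro y ⟨hyC, hyne⟩
        by_cases hyX : y ∈ X
        · exact Or.inl hyX
        · exact Or.inr ⟨⟨hyC, hyX⟩, hyne⟩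
      have hrdiff : mrk M (X ∪ C₂) = mrk M (X ∪ (C₂ \ {e})) := by
        refine mrk_eq_of_subset_closure hfin
          (union_subset_union_right X diff_subset) ?_ hXC₂E
        rintro y (hy | hy)
        · exact M.subset_closure _ (union_subset hXE ((diff_subset).trans hC₂E)) (Or.inl hy)
        · by_cases hye : y = e
          · subst hye
            exact M.closure_subset_closure hCdiffsub (hC.mem_closure_diff he.1)
          · exact M.subset_closure _ (union_subset hXE ((diff_subset).trans hC₂E))
              (Or.inr ⟨hy, hye⟩)
      -- key claim
      have hkey : ¬ (X ∩ M.closure C₂ ⊆ M.closure (C₂ \ {e})) := by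
        intro hsubs
        set W : Set α := M.closure (C₂ \ {e}) with hWdef
        have hWE : W ⊆ M.E := M.closure_subset_ground _
        have hdiffE : C₂ \ {e} ⊆ M.E := (diff_subset).trans hC₂E
        have h1 : mrk M (X ∩ M.closure C₂) ≤ mrk M (X ∩ W) :=
          mrk_mono hfin (subset_inter inter_subset_left
            (fun y hy => hsubs hy)) (inter_subset_left.trans hXE)
        have h2 := mrk_submod hfin hXE hWE
        have hrW : mrk M W = (C₂ \ {e}).ncard := by
          rw [hWdef, mrk_closure_eq hfin hdiffE,
            mrk_indep hfin (hC₂indep.subset diff_subset)]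
        have hrXW' : mrk M (X ∪ W) = mrk M (X ∪ (C₂ \ {e})) := by
          refine mrk_eq_of_subset_closure hfin
            (union_subset_union_right X (M.subset_closure _ hdiffE)) ?_
            (union_subset hXE hWE)
          exact union_subset
            ((subset_union_left).trans (M.subset_closure _ (union_subset hXE hdiffE)))
            (M.closure_subset_closure subset_union_right)
        have hm : (C₂ \ {e}).ncard + 1 = C₂.ncard :=
          Set.ncard_diff_singleton_add_one heC₂ hC₂fin
        rw [hrXW', ← hrdiff] at h2
        rw [hrW] at h2
        omega
      obtain ⟨x, hx, hxW⟩ := not_subset.1 hkey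
      have hxX : x ∈ X := hx.1
      have hxC₂ : x ∉ C₂ := fun h => h.2 hxX
      have hdep : ¬ M.Indep (insert x C₂) := by
        intro h
        exact ((hC₂indep.insert_indep_iff_of_notMem hxC₂).1 h).2 hx.2
      obtain ⟨C', hC'sub, hC'⟩ := exists_circuit_subset hfin
        (insert_subset (hXE hxX) hC₂E) hdep
      have hxC' : x ∈ C' := by
        by_contra h
        exact hC'.2.1 (hC₂indep.subset (fun y hy =>
          ((hC'sub hy).resolve_left (fun h' => h (h' ▸ hy)))))
      have heC' : e ∈ C' := by
        by_contra h
        refine hxW (M.closure_subset_closure (show C' \ {x} ⊆ C₂ \ {e} from ?_)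
          (hC'.mem_closure_diff hxC'))
        rintro y ⟨hyC', hyne⟩
        exact ⟨(hC'sub hyC').resolve_left hyne, fun h' => h (h' ▸ hyC')⟩
      exact ⟨x, hxX, C', hC', heC', hC'sub⟩
  · intro hcond
    -- X is a flat
    have hclsub : M.closure X ⊆ X := by
      intro e heX
      by_contra heNX
      obtain ⟨C, hC, heC, hCsub⟩ := exists_circuit_of_mem_closure hfin hXE heX heNX
      obtain ⟨x, hxX, C', hC', heC', hC'sub⟩ := hcond C hC e ⟨heC, heNX⟩
      have hC'pair : C' ⊆ insert x {e} := by
        refine hC'sub.trans (insert_subset_insert ?_)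
        rintro y ⟨hyC, hyX⟩
        rcases hCsub hyC with h | h
        · exact h
        · exact absurd h hyX
      have : M.Indep C' := by
        refine hsimple C' hC'.1 ?_
        refine le_trans (Set.ncard_le_ncard hC'pair ((Set.finite_singleton e).insert x)) ?_
        exact le_trans (Set.ncard_insert_le x {e}) (by simp)
      exact hC'.2.1 this
    have hXeq : M.closure X = X := hclsub.antisymm (M.subset_closure X hXE)
    have hflat : M.IsFlat X := hXeq ▸ flat_closure M X
    refine ⟨hflat, fun Y hY => ?_⟩
    obtain ⟨I, hI⟩ := M.exists_isBasis Y hY.subset_ground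
    have hYcl : M.closure I = Y := by
      refine subset_antisymm ?_ hI.subset_closure
      have := M.closure_subset_closure hI.subset
      rwa [hY.closure] at this
    have hrY : mrk M Y = I.ncard := mrk_eq_ncard_of_basis hfin hY.subset_ground hI
    have hkey := key_ind hfin hXE hflat hcond (I \ X).ncard I hI.indep rfl
    rw [hYcl] at hkey
    have hXY : X ∪ Y ⊆ M.E := union_subset hXE hY.subset_ground
    have hle1 : mrk M (X ∪ I) ≤ mrk M (M.closure (X ∪ Y)) := by
      refine mrk_mono hfin ?_ (M.closure_subset_ground _)
      exact union_subset
        ((subset_union_left).trans (M.subset_closure _ hXY))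
        ((hI.subset.trans subset_union_right).trans (M.subset_closure _ hXY))
    have hge := mrk_submod hfin hXE hY.subset_ground
    rw [← mrk_closure_eq hfin hXY] at hge
    rw [hrY]
    omega

end Paper
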